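/- Boundedness of the LTC neuron state: if x: [0,∞) → ℝ satisfies dx/dt = -(1/τ + f(t))·x + f(t)·A with τ > 0, f(t) ∈ [0, M] for all t, A ∈ ℝ, and x(0) ∈ [min(0,A), max(0,A)], then x(t) ∈ [min(0,A), max(0,A)] for all t ≥ 0. -/

import Mathlib

open intervalIntegral in
private lemma ltc_upper (τ A c M : ℝ) (f : ℝ → ℝ) (x : ℝ → ℝ)
    (hτ : 0 < τ) (hfcont : Continuous f)
    (hf : ∀ t, f t ∈ Set.Icc (0:ℝ) M)
    (hx : ∀ t ≥ (0:ℝ), HasDerivAt x (-(1/τ + f t) * x t + f t * A) t)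
    (hc0 : 0 ≤ c) (hcA : A ≤ c) (h0 : x 0 ≤ c) :
    ∀ t ≥ (0:ℝ), x t ≤ c := by
  intro t ht
  set F : ℝ → ℝ := fun s => ∫ u in (0:ℝ)..s, f u with hF
  set E : ℝ → ℝ := fun s => Real.exp (s/τ + F s) with hE
  have hEpos : ∀ s, 0 < E s := fun s => Real.exp_pos _
  have hFd : ∀ s, HasDerivAt F (f s) s := fun s =>
    (hfcont.integral_hasStrictDerivAt 0 s).hasDerivAt
  have hEd : ∀ s, HasDerivAt E ((1/τ + f s) * E s) s := by
    intro s
    have h1 : HasDerivAt (fun u => u/τ + F u) (1/τ + f s) s :=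
      ((hasDerivAt_id s).div_const τ).add (hFd s)
    simpa [hE, mul_comm] using h1.exp
  set w : ℝ → ℝ := fun s => (x s - c) * E s with hw
  have hwd : ∀ s ∈ Set.Ico (0:ℝ) t,
      HasDerivAt w ((f s * (A - c) - c/τ) * E s) s := by
    intro s hs
    have hd := ((hx s hs.1).sub_const c).fun_mul (hEd s)
    refine hd.congr_deriv ?_
    field_simp
    ring
  have key : ∀ s ∈ Set.Icc (0:ℝ) t, w s ≤ w 0 := by
    have hcont : ContinuousOn w (Set.Icc 0 t) := by
      intro s hs
      rcases eq_or_lt_of_le hs.1 with h | h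
      · exact ((hx s h.le).sub_const c).continuousAt.continuousWithinAt.mul
          (hEd s).continuousAt.continuousWithinAt
      · exact ((hx s h.le).sub_const c).continuousAt.continuousWithinAt.mul
          (hEd s).continuousAt.continuousWithinAt
    refine image_le_of_deriv_right_le_deriv_boundary (f' := fun s => (f s * (A - c) - c/τ) * E s)
      (B := fun _ => w 0) (B' := fun _ => 0)
      hcont (fun s hs => (hwd s hs).hasDerivWithinAt) le_rfl continuousOn_const
      (fun s _ => hasDerivWithinAt_const _ _ _) ?_
    intro s _
    have h1 : f s * (A - c) ≤ 0 := mul_nonpos_of_nonneg_of_nonpos (hf s).1 (by linarith)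
    have h2 : 0 ≤ c / τ := div_nonneg hc0 hτ.le
    exact mul_nonpos_of_nonpos_of_nonneg (by linarith) (hEpos s).le
  have hwt : w t ≤ w 0 := key t ⟨ht, le_rfl⟩
  have hw0 : w 0 ≤ 0 := mul_nonpos_of_nonpos_of_nonneg (by linarith) (hEpos 0).le
  have : (x t - c) * E t ≤ 0 := le_trans hwt hw0
  nlinarith [hEpos t]

theorem ltc_state_bounded (τ A M : ℝ) (f : ℝ → ℝ) (x : ℝ → ℝ)
    (hτ : 0 < τ) (hfcont : Continuous f)
    (hf : ∀ t, f t ∈ Set.Icc (0:ℝ) M)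
    (hx : ∀ t ≥ (0:ℝ), HasDerivAt x (-(1/τ + f t) * x t + f t * A) t)
    (h0 : x 0 ∈ Set.Icc (min 0 A) (max 0 A)) :
    ∀ t ≥ (0:ℝ), x t ∈ Set.Icc (min 0 A) (max 0 A) := by
  intro t ht
  constructor
  · have hneg : ∀ s ≥ (0:ℝ), HasDerivAt (fun u => -x u)
        (-(1/τ + f s) * (-x s) + f s * (-A)) s := by
      intro s hs
      have := (hx s hs).fun_neg
      refine this.congr_deriv ?_
      ring
    have := ltc_upper τ (-A) (-(min 0 A)) M f (fun u => -x u) hτ hfcont hf hneg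
      (neg_nonneg.2 (min_le_left 0 A)) (neg_le_neg (min_le_right 0 A))
      (by simpa using neg_le_neg h0.1) t ht
    linarith
  · exact ltc_upper τ A (max 0 A) M f x hτ hfcont hf hx (le_max_left _ _)
      (le_max_right _ _) (le_trans h0.2 le_rfl) t ht
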